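/- arXiv:2012.00040 — 2 statements merged into one kernel-verified Lean document; each statement's English description precedes it below -/
import Mathlib

section
/- The bound 2·E_N^{A|B} ≤ I_{A,B} fails for general quantum states: there exists a pure state on two qubits whose logarithmic negativity (which equals the Rényi-1/2 entropy of the reduced state) exceeds half its mutual information (which equals the von Neumann entropy of the reduced state). -/
open Matrix BigOperators
open scoped Classical ComplexOrder

noncomputable section

/-- Single-qubit Pauli matrices. -/
def P_I : Matrix (Fin 2) (Fin 2) ℂ := 1
def P_X : Matrix (Fin 2) (Fin 2) ℂ := !![0, 1; 1, 0]
def P_Y : Matrix (Fin 2) (Fin 2) ℂ := !![0, -Complex.I; Complex.I, 0]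
def P_Z : Matrix (Fin 2) (Fin 2) ℂ := !![1, 0; 0, -1]

/-- Tensor (Kronecker) product of a family of single-qubit operators, acting on
`(ℂ²)^{⊗L}` realized as matrices indexed by `Fin L → Fin 2`. -/
def pauliKron {L : ℕ} (f : Fin L → Matrix (Fin 2) (Fin 2) ℂ) :
    Matrix (Fin L → Fin 2) (Fin L → Fin 2) ℂ :=
  Matrix.of fun x y => ∏ i, f i (x i) (y i)

/-- `g` is a product of Pauli operators, up to a phase in `{1,-1,i,-i}`. -/
def IsPauliProduct {L : ℕ} (g : Matrix (Fin L → Fin 2) (Fin L → Fin 2) ℂ) : Prop :=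
  ∃ (c : ℂ) (f : Fin L → Matrix (Fin 2) (Fin 2) ℂ),
    (c = 1 ∨ c = -1 ∨ c = Complex.I ∨ c = -Complex.I) ∧
    (∀ i, f i = P_I ∨ f i = P_X ∨ f i = P_Y ∨ f i = P_Z) ∧
    g = c • pauliKron f

/-- Tensor product of an operator on `H_A` and an operator on `H_B`. -/
def kron2 {a b : Type*} (M : Matrix a a ℂ) (N : Matrix b b ℂ) :
    Matrix (a × b) (a × b) ℂ :=
  Matrix.of fun p q => M p.1 q.1 * N p.2 q.2

/-- Partial transpose with respect to the `A` factor, in the fixed computational basis. -/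
def partialTransposeA {a b : Type*} (ρ : Matrix (a × b) (a × b) ℂ) :
    Matrix (a × b) (a × b) ℂ :=
  Matrix.of fun p q => ρ (q.1, p.2) (p.1, q.2)

/-- Trace norm `‖M‖₁ = Tr √(Mᴴ M)`, as the sum of singular values. -/
def traceNorm {n : Type*} [Fintype n] [DecidableEq n] (M : Matrix n n ℂ) : ℝ :=
  ∑ i, Real.sqrt ((Matrix.isHermitian_conjTranspose_mul_self M).eigenvalues i)

/-- Logarithmic entanglement negativity `E_N^{A|B}(ρ) = log₂ ‖ρ^{T_A}‖₁`. -/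
def logNegativity {a b : Type*} [Fintype a] [Fintype b] [DecidableEq a] [DecidableEq b]
    (ρ : Matrix (a × b) (a × b) ℂ) : ℝ :=
  Real.logb 2 (traceNorm (partialTransposeA ρ))

/-- Eigenvalues of a matrix (zero if the matrix is not Hermitian). -/
def eigs {n : Type*} [Fintype n] [DecidableEq n] (ρ : Matrix n n ℂ) : n → ℝ :=
  if h : ρ.IsHermitian then h.eigenvalues else fun _ => 0

/-- Von Neumann entropy in base 2, `S(ρ) = -Tr(ρ log₂ ρ)`. -/
def vnEntropy {n : Type*} [Fintype n] [DecidableEq n] (ρ : Matrix n n ℂ) : ℝ :=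
  -∑ i, (eigs ρ i) * Real.logb 2 (eigs ρ i)

/-- Rényi entropy of order `α` in base 2, with `S₀ = log₂ rank`. -/
def renyiEntropy {n : Type*} [Fintype n] [DecidableEq n] (α : ℝ) (ρ : Matrix n n ℂ) : ℝ :=
  if α = 0 then Real.logb 2 (ρ.rank)
  else (1 - α)⁻¹ * Real.logb 2 (∑ i, (eigs ρ i) ^ α)

/-- Partial trace over the `B` factor. -/
def ptraceB {a b : Type*} [Fintype b] (ρ : Matrix (a × b) (a × b) ℂ) : Matrix a a ℂ :=
  Matrix.of fun i i' => ∑ j, ρ (i, j) (i', j)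

/-- Partial trace over the `A` factor. -/
def ptraceA {a b : Type*} [Fintype a] (ρ : Matrix (a × b) (a × b) ℂ) : Matrix b b ℂ :=
  Matrix.of fun j j' => ∑ i, ρ (i, j) (i, j')

/-- The 𝔽₂ anticommutation matrix `J` of a family of operators:
`J i j = 1` iff the `i`-th and `j`-th operators fail to commute (for Pauli products,
this means they anticommute). -/
def anticommMatrix {n κ : Type*} [Fintype n] (hA : κ → Matrix n n ℂ) : Matrix κ κ (ZMod 2) :=
  Matrix.of fun i j => if Commute (hA i) (hA j) then 0 else 1

/-- Standard form: `ma` copies of the block `[[0,1],[1,0]]` along the diagonal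
(occupying the first `2*ma` indices), and zeros elsewhere. -/
def stdSymplectic (m ma : ℕ) : Matrix (Fin m) (Fin m) (ZMod 2) :=
  Matrix.of fun i j =>
    if i.val < 2 * ma ∧ j.val < 2 * ma ∧ i.val / 2 = j.val / 2 ∧ i.val ≠ j.val then 1 else 0


/-! ### Auxiliary machinery -/

section Aux

open Polynomial in
lemma aux_charpoly_conj_units {n : Type*} [Fintype n] [DecidableEq n]
    (U V A : Matrix n n ℂ) (hUV : U * V = 1) (hVU : V * U = 1) :
    (U * A * V).charpoly = A.charpoly := by
  have hc : charmatrix (U * A * V) =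
      U.map Polynomial.C * charmatrix A * V.map Polynomial.C := by
    unfold charmatrix
    rw [Matrix.mul_sub, Matrix.sub_mul]
    congr 1
    · rw [Matrix.mul_assoc, scalar_commute (X : ℂ[X]) (fun r => Commute.all _ _) (V.map C),
        ← Matrix.mul_assoc, ← Matrix.map_mul, hUV, Matrix.map_one _ (map_zero C) (map_one C),
        Matrix.one_mul]
    · simp only [RingHom.mapMatrix_apply, Matrix.map_mul]
  unfold Matrix.charpoly
  rw [hc, Matrix.det_mul, Matrix.det_mul, mul_comm, ← mul_assoc, ← Matrix.det_mul,
    ← Matrix.map_mul, hVU, Matrix.map_one _ (map_zero C) (map_one C), Matrix.det_one, one_mul]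

open Polynomial in
lemma aux_charpoly_diag {n : Type*} [Fintype n] [DecidableEq n] (v : n → ℂ) :
    (Matrix.diagonal v).charpoly = ∏ i, (X - C (v i)) := by
  have h : charmatrix (Matrix.diagonal v) = Matrix.diagonal (fun i => X - C (v i)) := by
    ext i j
    by_cases h : i = j
    · subst h; simp
    · simp [charmatrix_apply_ne _ _ _ h, Matrix.diagonal_apply_ne _ h]
  unfold Matrix.charpoly
  rw [h, Matrix.det_diagonal]

open Polynomial in
lemma aux_charpoly_eq_prod_eig {n : Type*} [Fintype n] [DecidableEq n] {A : Matrix n n ℂ}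
    (hA : A.IsHermitian) :
    A.charpoly = ∏ i, (X - C ((hA.eigenvalues i : ℝ) : ℂ)) := by
  have hU := hA.eigenvectorUnitary.2
  conv_lhs => rw [hA.spectral_theorem, Unitary.conjStarAlgAut_apply]
  rw [aux_charpoly_conj_units _ _ _ ((Matrix.mem_unitaryGroup_iff).mp hU)
      ((Matrix.mem_unitaryGroup_iff').mp hU), aux_charpoly_diag]
  rfl

open Polynomial in
lemma aux_multiset_prod_eq {n : Type*} [Fintype n] (e : n → ℂ) :
    ∏ i, (X - C (e i)) = ((Finset.univ.val.map e).map (fun a => X - C a)).prod := by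
  rw [Multiset.map_map]; rfl

lemma aux_eig_multiset {n : Type*} [Fintype n] [DecidableEq n] {A : Matrix n n ℂ}
    (hA : A.IsHermitian) (d : n → ℝ) (hd : A = Matrix.diagonal (fun i => ((d i : ℝ) : ℂ))) :
    Finset.univ.val.map hA.eigenvalues = Finset.univ.val.map d := by
  have h1 := aux_charpoly_eq_prod_eig hA
  have h2 : A.charpoly = ∏ i, (Polynomial.X - Polynomial.C ((d i : ℝ) : ℂ)) := by
    rw [hd]; exact aux_charpoly_diag _
  have h3 := h1.symm.trans h2
  rw [aux_multiset_prod_eq, aux_multiset_prod_eq] at h3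
  have h4 := congrArg Polynomial.roots h3
  rw [Polynomial.roots_multiset_prod_X_sub_C, Polynomial.roots_multiset_prod_X_sub_C] at h4
  have h5 : (Finset.univ.val.map hA.eigenvalues).map (fun x : ℝ => (x : ℂ))
      = (Finset.univ.val.map d).map (fun x : ℝ => (x : ℂ)) := by
    rw [Multiset.map_map, Multiset.map_map]; exact h4
  exact Multiset.map_injective Complex.ofReal_injective h5

lemma aux_sum_g_eig {n : Type*} [Fintype n] [DecidableEq n] {A : Matrix n n ℂ}
    (hA : A.IsHermitian) (d : n → ℝ) (hd : A = Matrix.diagonal (fun i => ((d i : ℝ) : ℂ)))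
    (g : ℝ → ℝ) : ∑ i, g (hA.eigenvalues i) = ∑ i, g (d i) := by
  have h := congrArg (fun s => (Multiset.map g s).sum) (aux_eig_multiset hA d hd)
  simp only [Multiset.map_map] at h
  exact h

lemma aux_eig_idem {n : Type*} [Fintype n] [DecidableEq n] {A : Matrix n n ℂ}
    (hA : A.IsHermitian) (hid : A * A = A) (i : n) :
    hA.eigenvalues i = 0 ∨ hA.eigenvalues i = 1 := by
  have hU := hA.eigenvectorUnitary.2
  have h : star (↑hA.eigenvectorUnitary : Matrix n n ℂ) * A * (↑hA.eigenvectorUnitary : Matrix n n ℂ)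
      = Matrix.diagonal (RCLike.ofReal ∘ hA.eigenvalues) := by
    have := hA.conjStarAlgAut_star_eigenvectorUnitary
    rwa [Unitary.conjStarAlgAut_star_apply] at this
  have hsq : (Matrix.diagonal (RCLike.ofReal ∘ hA.eigenvalues) : Matrix n n ℂ) *
      Matrix.diagonal (RCLike.ofReal ∘ hA.eigenvalues)
      = Matrix.diagonal (RCLike.ofReal ∘ hA.eigenvalues) := by
    rw [← h]
    set U := (↑hA.eigenvectorUnitary : Matrix n n ℂ) with hUdef
    set S := star U with hSdef
    have h1 : U * S = 1 := (Matrix.mem_unitaryGroup_iff).mp hU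
    have h1' : ∀ X : Matrix n n ℂ, U * (S * X) = X := fun X => by
      rw [← Matrix.mul_assoc, h1, Matrix.one_mul]
    calc (S * A * U) * (S * A * U) = S * (A * (U * (S * (A * U)))) := by
          simp only [Matrix.mul_assoc]
      _ = S * (A * (A * U)) := by rw [h1']
      _ = S * A * U := by rw [← Matrix.mul_assoc A A U, hid, Matrix.mul_assoc]
  rw [Matrix.diagonal_mul_diagonal] at hsq
  have h2 := congrFun (Matrix.diagonal_injective hsq) i
  simp only [Pi.mul_apply, Function.comp_apply] at h2
  have h3 : (hA.eigenvalues i) * (hA.eigenvalues i) = hA.eigenvalues i := by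
    exact_mod_cast h2
  rcases mul_eq_zero.mp (by ring_nf; linarith [h3] :
      hA.eigenvalues i * (hA.eigenvalues i - 1) = 0) with h4 | h4
  · exact Or.inl h4
  · exact Or.inr (by linarith)

lemma aux_core {u ε t H : ℝ} (D : ℝ) (hD : 1 ≤ D) (hu : u = (11 * D)⁻¹) (he : ε = u ^ 4)
    (ht : t = Real.sqrt (1 - ε))
    (hH : H = -(ε * Real.logb 2 ε + (1 - ε) * Real.logb 2 (1 - ε))) :
    0 < H ∧ D * H < 2 * Real.logb 2 (u ^ 2 + t) := by
  have hD0 : (0:ℝ) < D := lt_of_lt_of_le one_pos hD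
  have hu0 : 0 < u := by rw [hu]; positivity
  have hu1 : u ≤ 1 / 11 := by
    rw [hu, inv_le_comm₀ (by positivity) (by norm_num)]
    calc (1/11 : ℝ)⁻¹ = 11 := by norm_num
    _ ≤ 11 * D := by nlinarith
  have hεsmall : ε < 1 / 2 := by
    have h1 : u ^ 4 ≤ (1/11 : ℝ) ^ 4 := pow_le_pow_left₀ hu0.le hu1 4
    rw [he]; nlinarith
  have hε0 : 0 < ε := by rw [he]; positivity
  have h1e : (0:ℝ) < 1 - ε := by linarith
  have hL : (0:ℝ) < Real.log 2 := Real.log_pos (by norm_num)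
  set L := Real.log 2 with hLdef
  have h12 : (1:ℝ) < 2 := by norm_num
  have hlog1 : Real.logb 2 ε < 0 := Real.logb_neg h12 hε0 (by linarith)
  have hlog2 : Real.logb 2 (1 - ε) < 0 := Real.logb_neg h12 h1e (by linarith)
  have hH0 : 0 < H := by
    have t1 : ε * Real.logb 2 ε < 0 := mul_neg_of_pos_of_neg hε0 hlog1
    have t2 : (1 - ε) * Real.logb 2 (1 - ε) < 0 := mul_neg_of_pos_of_neg h1e hlog2
    rw [hH]; linarith
  refine ⟨hH0, ?_⟩
  have ha : -((1 - ε) * Real.log (1 - ε)) ≤ ε := by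
    have h := Real.log_le_sub_one_of_pos (show (0:ℝ) < (1 - ε)⁻¹ by positivity)
    rw [Real.log_inv] at h
    have h3 := mul_le_mul_of_nonneg_left h h1e.le
    have h4 : (1 - ε) * ((1 - ε)⁻¹ - 1) = ε := by field_simp; ring
    nlinarith
  have hb : -(ε * Real.log ε) ≤ 4 * u ^ 3 := by
    have hlogε : Real.log ε = 4 * Real.log u := by
      rw [he, show u ^ 4 = u ^ (4:ℕ) by norm_num, Real.log_pow]; norm_num
    have h := Real.log_le_sub_one_of_pos (show (0:ℝ) < u⁻¹ by positivity)
    rw [Real.log_inv] at h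
    have h2 : -Real.log u ≤ u⁻¹ := by nlinarith [inv_pos.mpr hu0]
    have h3 : u ^ 4 * u⁻¹ = u ^ 3 := by field_simp
    calc -(ε * Real.log ε) = 4 * (u ^ 4 * (-Real.log u)) := by rw [hlogε, he]; ring
      _ ≤ 4 * (u ^ 4 * u⁻¹) := by
          have := mul_le_mul_of_nonneg_left h2 (show (0:ℝ) ≤ u ^ 4 by positivity)
          linarith
      _ = 4 * u ^ 3 := by rw [h3]
  have hε3 : ε ≤ u ^ 3 := by rw [he]; nlinarith
  have hHle : H * L ≤ 5 * u ^ 3 := by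
    have e1 : H * L = -(ε * Real.log ε) + -((1 - ε) * Real.log (1 - ε)) := by
      rw [hH, Real.logb, Real.logb, hLdef]
      field_simp
      ring
    rw [e1]; linarith
  have htge : 1 - ε ≤ t := by
    have h1 : Real.sqrt ((1 - ε) ^ 2) ≤ Real.sqrt (1 - ε) := by
      apply Real.sqrt_le_sqrt; nlinarith
    rwa [Real.sqrt_sq h1e.le, ← ht] at h1
  have hsum : 1 + u ^ 2 / 2 ≤ u ^ 2 + t := by nlinarith [sq_nonneg u, hu1, hu0]
  have hlogsum : u ^ 2 / 4 ≤ Real.log (u ^ 2 + t) := by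
    have hx0 : (0:ℝ) < 1 + u ^ 2 / 2 := by positivity
    have h := Real.log_le_sub_one_of_pos (show (0:ℝ) < (1 + u ^ 2 / 2)⁻¹ by positivity)
    rw [Real.log_inv] at h
    have h2 : 1 - (1 + u ^ 2 / 2)⁻¹ ≤ Real.log (1 + u ^ 2 / 2) := by linarith
    have e2 : 1 - (1 + u ^ 2 / 2)⁻¹ = (u ^ 2 / 2) / (1 + u ^ 2 / 2) := by field_simp; ring
    have h4 : u ^ 2 / 4 ≤ (u ^ 2 / 2) / (1 + u ^ 2 / 2) := by
      rw [div_le_div_iff₀ (by norm_num) hx0]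
      nlinarith [pow_le_pow_left₀ hu0.le hu1 2]
    have h5 := Real.log_le_log hx0 hsum
    linarith
  have hfinal : D * (H * L) < 2 * Real.log (u ^ 2 + t) := by
    have hDu : D * u = 1 / 11 := by rw [hu]; field_simp
    have h1 : D * (H * L) ≤ D * (5 * u ^ 3) := mul_le_mul_of_nonneg_left hHle hD0.le
    have h2 : D * (5 * u ^ 3) = 5 / 11 * u ^ 2 := by
      calc D * (5 * u ^ 3) = 5 * (D * u) * u ^ 2 := by ring
        _ = 5 / 11 * u ^ 2 := by rw [hDu]; ring
    have hu2 : (0:ℝ) < u ^ 2 := by positivity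
    have h3 : 5 / 11 * u ^ 2 < u ^ 2 / 2 := by linarith
    linarith
  have e3 : 2 * Real.logb 2 (u ^ 2 + t) = (2 * Real.log (u ^ 2 + t)) / L := by
    rw [Real.logb, hLdef]; ring
  rw [e3, lt_div_iff₀ hL]
  calc D * H * L = D * (H * L) := by ring
    _ < 2 * Real.log (u ^ 2 + t) := hfinal

/-- the pure-state vector with Schmidt coefficients `a 0, a 1`. -/
def myPsi (a : Fin 2 → ℝ) : Fin 2 × Fin 2 → ℂ :=
  fun p => if p.1 = p.2 then (a p.1 : ℂ) else 0

lemma star_myPsi (a : Fin 2 → ℝ) (p : Fin 2 × Fin 2) :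
    (starRingEnd ℂ) (myPsi a p) = myPsi a p := by
  simp [myPsi, apply_ite (starRingEnd ℂ)]

lemma P1 (a : Fin 2 → ℝ) :
    (Matrix.vecMulVec (myPsi a) (star (myPsi a))).trace = ((a 0 ^ 2 + a 1 ^ 2 : ℝ) : ℂ) := by
  simp [Matrix.trace, Matrix.diag, Matrix.vecMulVec_apply, myPsi, Fintype.sum_prod_type,
    Fin.sum_univ_two, Pi.star_apply, ← Complex.ofReal_mul]
  push_cast
  ring

lemma P2 (a : Fin 2 → ℝ) :
    (Matrix.vecMulVec (myPsi a) (star (myPsi a))).IsHermitian := by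
  unfold Matrix.IsHermitian
  ext p q
  simp [Matrix.conjTranspose_apply, Matrix.vecMulVec_apply, Pi.star_apply, star_myPsi,
    mul_comm]

lemma P3 (a : Fin 2 → ℝ) (hnorm : a 0 ^ 2 + a 1 ^ 2 = 1) :
    (Matrix.vecMulVec (myPsi a) (star (myPsi a))) * (Matrix.vecMulVec (myPsi a) (star (myPsi a)))
      = Matrix.vecMulVec (myPsi a) (star (myPsi a)) := by
  have h : ((a 0 : ℂ)) ^ 2 + ((a 1 : ℂ)) ^ 2 = 1 := by exact_mod_cast hnorm
  ext ⟨i,j⟩ ⟨k,l⟩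
  simp [Matrix.mul_apply, Matrix.vecMulVec_apply, myPsi, Fintype.sum_prod_type,
    Fin.sum_univ_two, Pi.star_apply, apply_ite (starRingEnd ℂ)]
  fin_cases i <;> fin_cases j <;> fin_cases k <;> fin_cases l <;> simp <;>
    first
      | linear_combination ((a 0 : ℂ)) ^ 2 * h
      | linear_combination ((a 0 : ℂ)) * ((a 1 : ℂ)) * h
      | linear_combination ((a 1 : ℂ)) ^ 2 * h

lemma P4 (a : Fin 2 → ℝ) :
    ptraceB (Matrix.vecMulVec (myPsi a) (star (myPsi a)))
      = Matrix.diagonal (fun i => ((a i ^ 2 : ℝ) : ℂ)) := by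
  ext i k
  simp [ptraceB, Matrix.vecMulVec_apply, myPsi, Fin.sum_univ_two, Pi.star_apply,
    apply_ite (starRingEnd ℂ), Matrix.diagonal_apply]
  fin_cases i <;> fin_cases k <;> simp <;> ring

lemma P5 (a : Fin 2 → ℝ) :
    ptraceA (Matrix.vecMulVec (myPsi a) (star (myPsi a)))
      = Matrix.diagonal (fun i => ((a i ^ 2 : ℝ) : ℂ)) := by
  ext j l
  simp [ptraceA, Matrix.vecMulVec_apply, myPsi, Fin.sum_univ_two, Pi.star_apply,
    apply_ite (starRingEnd ℂ), Matrix.diagonal_apply]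
  fin_cases j <;> fin_cases l <;> simp <;> ring

lemma P6 (a : Fin 2 → ℝ) :
    (partialTransposeA (Matrix.vecMulVec (myPsi a) (star (myPsi a))))ᴴ *
      (partialTransposeA (Matrix.vecMulVec (myPsi a) (star (myPsi a))))
      = Matrix.diagonal (fun p : Fin 2 × Fin 2 => ((a p.1 ^ 2 * a p.2 ^ 2 : ℝ) : ℂ)) := by
  ext ⟨i,j⟩ ⟨k,l⟩
  simp [Matrix.mul_apply, Matrix.conjTranspose_apply, partialTransposeA,
    Matrix.vecMulVec_apply, myPsi, Fintype.sum_prod_type, Fin.sum_univ_two, Pi.star_apply,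
    apply_ite (starRingEnd ℂ), Matrix.diagonal_apply]
  fin_cases i <;> fin_cases j <;> fin_cases k <;> fin_cases l <;> simp <;> ring

lemma aux_isHermitian_diag_real {n : Type*} [Fintype n] [DecidableEq n] (d : n → ℝ) :
    (Matrix.diagonal (fun i => ((d i : ℝ) : ℂ))).IsHermitian := by
  unfold Matrix.IsHermitian
  ext i j
  by_cases h : i = j
  · subst h
    simp [Matrix.conjTranspose_apply, Matrix.diagonal_apply_eq]
  · simp [Matrix.conjTranspose_apply, Matrix.diagonal_apply_ne _ (Ne.symm h),
      Matrix.diagonal_apply_ne _ h]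

lemma aux_vn_diag {n : Type*} [Fintype n] [DecidableEq n] (d : n → ℝ) :
    vnEntropy (Matrix.diagonal (fun i => ((d i : ℝ) : ℂ)))
      = -∑ i, d i * Real.logb 2 (d i) := by
  have hherm := aux_isHermitian_diag_real d
  unfold vnEntropy eigs
  rw [dif_pos hherm]
  congr 1
  exact aux_sum_g_eig hherm d rfl (fun x => x * Real.logb 2 x)

lemma aux_renyi_diag {n : Type*} [Fintype n] [DecidableEq n] (d : n → ℝ) :
    renyiEntropy (1/2) (Matrix.diagonal (fun i => ((d i : ℝ) : ℂ)))
      = 2 * Real.logb 2 (∑ i, (d i) ^ ((1:ℝ)/2)) := by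
  have hherm := aux_isHermitian_diag_real d
  unfold renyiEntropy eigs
  rw [if_neg (by norm_num), dif_pos hherm,
    aux_sum_g_eig hherm d rfl (fun x => x ^ ((1:ℝ)/2))]
  norm_num

lemma aux_vn_pure (a : Fin 2 → ℝ) (hnorm : a 0 ^ 2 + a 1 ^ 2 = 1) :
    vnEntropy (Matrix.vecMulVec (myPsi a) (star (myPsi a))) = 0 := by
  have hherm := P2 a
  unfold vnEntropy eigs
  rw [dif_pos hherm]
  rw [neg_eq_zero]
  apply Finset.sum_eq_zero
  intro i _
  rcases aux_eig_idem hherm (P3 a hnorm) i with h | h <;> rw [h] <;> simp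

end Aux

lemma aux_part2 (D : ℝ) (hD : 1 ≤ D) :
    ∃ ρA : Matrix (Fin 2) (Fin 2) ℂ, ρA.PosSemidef ∧ ρA.trace = 1 ∧
      0 < vnEntropy ρA ∧ D * vnEntropy ρA < renyiEntropy (1/2) ρA := by
  set u : ℝ := (11 * D)⁻¹ with hu
  set ε : ℝ := u ^ 4 with he
  set t : ℝ := Real.sqrt (1 - ε) with ht
  obtain ⟨hH0, hlt⟩ := aux_core D hD hu he ht rfl
  have hD0 : (0:ℝ) < D := lt_of_lt_of_le one_pos hD
  have hu0 : 0 < u := by rw [hu]; positivity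
  have hu1 : u ≤ 1 / 11 := by
    rw [hu, inv_le_comm₀ (by positivity) (by norm_num)]
    calc (1/11 : ℝ)⁻¹ = 11 := by norm_num
      _ ≤ 11 * D := by nlinarith
  have hεsmall : ε < 1 / 2 := by
    have h1 : u ^ 4 ≤ (1/11:ℝ) ^ 4 := pow_le_pow_left₀ hu0.le hu1 4
    rw [he]; nlinarith
  have hε0 : 0 < ε := by rw [he]; positivity
  have h1e : (0:ℝ) < 1 - ε := by linarith
  set d : Fin 2 → ℝ := ![ε, 1 - ε] with hd
  have hd0 : d 0 = ε := rfl
  have hd1 : d 1 = 1 - ε := rfl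
  have hsqε : Real.sqrt ε = u ^ 2 := by
    rw [he, show u ^ 4 = (u ^ 2) ^ 2 by ring, Real.sqrt_sq (sq_nonneg u)]
  have hvn : vnEntropy (Matrix.diagonal (fun i => ((d i : ℝ) : ℂ)))
      = -(ε * Real.logb 2 ε + (1 - ε) * Real.logb 2 (1 - ε)) := by
    rw [aux_vn_diag]
    simp only [Fin.sum_univ_two, hd0, hd1]
  have hre : renyiEntropy (1/2) (Matrix.diagonal (fun i => ((d i : ℝ) : ℂ)))
      = 2 * Real.logb 2 (u ^ 2 + t) := by
    rw [aux_renyi_diag]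
    congr 2
    simp only [Fin.sum_univ_two, hd0, hd1]
    rw [← Real.sqrt_eq_rpow, ← Real.sqrt_eq_rpow, hsqε, ht]
  refine ⟨Matrix.diagonal (fun i => ((d i : ℝ) : ℂ)), ?_, ?_, ?_, ?_⟩
  · apply Matrix.PosSemidef.diagonal
    intro i
    refine Complex.zero_le_real.mpr ?_
    fin_cases i
    · exact hε0.le
    · exact h1e.le
  · rw [Matrix.trace_diagonal]
    simp only [Fin.sum_univ_two, hd0, hd1]
    push_cast
    ring
  · rw [hvn]; exact hH0
  · rw [hvn, hre]; exact hlt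

/-- The bound `2·E_N ≤ I` fails for general states: there is a two-qubit
pure state with `2·E_N^{A|B} > I_{A,B}`; more strongly, the ratio `S_{1/2}(ρ_A)/S(ρ_A)`
is unbounded over single-qubit density matrices. -/
theorem stmt10 :
    (∃ (ψ : Fin 2 × Fin 2 → ℂ)
       (ρ : Matrix (Fin 2 × Fin 2) (Fin 2 × Fin 2) ℂ),
      ρ = Matrix.vecMulVec ψ (star ψ) ∧ ρ.trace = 1 ∧
      2 * logNegativity ρ >
        vnEntropy (ptraceB ρ) + vnEntropy (ptraceA ρ) - vnEntropy ρ) ∧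
    (∀ C : ℝ, ∃ ρA : Matrix (Fin 2) (Fin 2) ℂ, ρA.PosSemidef ∧ ρA.trace = 1 ∧
      0 < vnEntropy ρA ∧ renyiEntropy (1 / 2) ρA > C * vnEntropy ρA) := by
  constructor
  · -- part 1 : pure state violating 2·E_N ≤ I
    have hD : (1:ℝ) ≤ 1 := le_refl 1
    set u : ℝ := (11 * 1 : ℝ)⁻¹ with hu
    set ε : ℝ := u ^ 4 with he
    set t : ℝ := Real.sqrt (1 - ε) with ht
    obtain ⟨hH0, hlt⟩ := aux_core 1 hD hu he ht rfl
    have hu0 : 0 < u := by rw [hu]; norm_num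
    have hεsmall : ε < 1 / 2 := by rw [he, hu]; norm_num
    have hε0 : 0 < ε := by rw [he]; positivity
    have h1e : (0:ℝ) < 1 - ε := by rw [he, hu]; norm_num
    have ht0 : 0 ≤ t := Real.sqrt_nonneg _
    have ht2 : t ^ 2 = 1 - ε := Real.sq_sqrt h1e.le
    set a : Fin 2 → ℝ := ![u ^ 2, t] with ha
    have ha0 : a 0 = u ^ 2 := rfl
    have ha1 : a 1 = t := rfl
    have hnorm : a 0 ^ 2 + a 1 ^ 2 = 1 := by rw [ha0, ha1, ht2, he]; ring
    have hanneg : ∀ i, 0 ≤ a i := by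
      intro i; fin_cases i
      · exact sq_nonneg u
      · exact ht0
    have ha02 : a 0 ^ 2 = ε := by rw [ha0, he]; ring
    have ha12 : a 1 ^ 2 = 1 - ε := by rw [ha1, ht2]
    refine ⟨myPsi a, Matrix.vecMulVec (myPsi a) (star (myPsi a)), rfl, ?_, ?_⟩
    · rw [P1 a, hnorm]; norm_num
    · have hvnB : vnEntropy (ptraceB (Matrix.vecMulVec (myPsi a) (star (myPsi a))))
          = -(ε * Real.logb 2 ε + (1 - ε) * Real.logb 2 (1 - ε)) := by
        rw [P4 a, aux_vn_diag]
        simp only [Fin.sum_univ_two, ha02, ha12]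
      have hvnA : vnEntropy (ptraceA (Matrix.vecMulVec (myPsi a) (star (myPsi a))))
          = -(ε * Real.logb 2 ε + (1 - ε) * Real.logb 2 (1 - ε)) := by
        rw [P5 a, aux_vn_diag]
        simp only [Fin.sum_univ_two, ha02, ha12]
      have hvn0 : vnEntropy (Matrix.vecMulVec (myPsi a) (star (myPsi a))) = 0 :=
        aux_vn_pure a hnorm
      have hs : ∀ i j : Fin 2, Real.sqrt (a i ^ 2 * a j ^ 2) = a i * a j := fun i j => by
        rw [show a i ^ 2 * a j ^ 2 = (a i * a j) ^ 2 by ring,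
          Real.sqrt_sq (mul_nonneg (hanneg i) (hanneg j))]
      have hlogneg : logNegativity (Matrix.vecMulVec (myPsi a) (star (myPsi a)))
          = 2 * Real.logb 2 (u ^ 2 + t) := by
        unfold logNegativity traceNorm
        rw [aux_sum_g_eig (Matrix.isHermitian_conjTranspose_mul_self _) _ (P6 a) Real.sqrt]
        have hsum : (∑ p : Fin 2 × Fin 2, Real.sqrt (a p.1 ^ 2 * a p.2 ^ 2))
            = (u ^ 2 + t) ^ 2 := by
          simp only [Fintype.sum_prod_type, Fin.sum_univ_two, hs, ha0, ha1]
          ring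
        rw [hsum, Real.logb_pow]
        norm_num
      rw [hvnB, hvnA, hvn0, hlogneg]
      rw [one_mul] at hlt
      linarith
  · -- part 2 : unbounded ratio
    intro C
    obtain ⟨ρA, hpsd, htr, hvn, hlt⟩ := aux_part2 (max C 1) (le_max_right _ _)
    refine ⟨ρA, hpsd, htr, hvn, ?_⟩
    have h1 : C * vnEntropy ρA ≤ max C 1 * vnEntropy ρA :=
      mul_le_mul_of_nonneg_right (le_max_left _ _) hvn.le
    exact lt_of_le_of_lt h1 hlt
end
end

section
/- Let ρ = (1/2^L)(1 + a + b + ab) where a, b are commuting Hermitian Pauli-product operators on L qubits (a² = b² = 1) whose A-parts anticommute, so that ρ^{T_A} = (1/2^L)(1 + ã + b̃ − ãb̃) for operators ã = a^{T_A}, b̃ = b^{T_A} which are again Hermitian Pauli products with ã² = b̃² = 1 and [ã,b̃]=0. Then ‖ρ^{T_A}‖₁ = 2·Tr(ρ), i.e. the partial transpose of one anticommuting generator pair doubles the trace norm. -/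
open Matrix BigOperators
open scoped Classical ComplexOrder

noncomputable section

/-! ### Auxiliary lemmas -/

section Aux

set_option linter.unusedSectionVars false

variable {a b : Type*} [Fintype a] [Fintype b] [DecidableEq a] [DecidableEq b]

lemma kron2_mul (M M' : Matrix a a ℂ) (N N' : Matrix b b ℂ) :
    kron2 M N * kron2 M' N' = kron2 (M * M') (N * N') := by
  ext ⟨p1, p2⟩ ⟨q1, q2⟩
  simp only [kron2, Matrix.mul_apply, Matrix.of_apply, Fintype.sum_prod_type]
  rw [Finset.sum_mul_sum]
  exact Finset.sum_congr rfl fun y1 _ => Finset.sum_congr rfl fun y2 _ => by ring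

lemma kron2_one : (kron2 (1 : Matrix a a ℂ) (1 : Matrix b b ℂ)) = 1 := by
  ext ⟨p1, p2⟩ ⟨q1, q2⟩
  simp only [kron2, Matrix.one_apply, Prod.ext_iff, Matrix.of_apply]
  split_ifs <;> simp_all

lemma kron2_smul_left (c : ℂ) (M : Matrix a a ℂ) (N : Matrix b b ℂ) :
    kron2 (c • M) N = c • kron2 M N := by
  ext ⟨p1, p2⟩ ⟨q1, q2⟩; simp [kron2, mul_assoc]

lemma kron2_smul_right (c : ℂ) (M : Matrix a a ℂ) (N : Matrix b b ℂ) :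
    kron2 M (c • N) = c • kron2 M N := by
  ext ⟨p1, p2⟩ ⟨q1, q2⟩; simp [kron2]; ring

lemma kron2_neg_left (M : Matrix a a ℂ) (N : Matrix b b ℂ) :
    kron2 (-M) N = -kron2 M N := by
  ext ⟨p1, p2⟩ ⟨q1, q2⟩; simp [kron2]

lemma kron2_neg_right (M : Matrix a a ℂ) (N : Matrix b b ℂ) :
    kron2 M (-N) = -kron2 M N := by
  ext ⟨p1, p2⟩ ⟨q1, q2⟩; simp [kron2]

lemma trace_kron2 (M : Matrix a a ℂ) (N : Matrix b b ℂ) :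
    (kron2 M N).trace = M.trace * N.trace := by
  simp only [Matrix.trace, Matrix.diag, kron2, Matrix.of_apply, Fintype.sum_prod_type,
    Finset.sum_mul_sum]

lemma pt_kron2 (M : Matrix a a ℂ) (N : Matrix b b ℂ) :
    partialTransposeA (kron2 M N) = kron2 Mᵀ N := rfl

lemma pt_add (ρ σ : Matrix (a × b) (a × b) ℂ) :
    partialTransposeA (ρ + σ) = partialTransposeA ρ + partialTransposeA σ := rfl

lemma pt_smul (c : ℂ) (ρ : Matrix (a × b) (a × b) ℂ) :
    partialTransposeA (c • ρ) = c • partialTransposeA ρ := rfl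

lemma pt_one : partialTransposeA (1 : Matrix (a × b) (a × b) ℂ) = 1 := by
  ext ⟨p1, p2⟩ ⟨q1, q2⟩
  simp only [partialTransposeA, Matrix.of_apply, Matrix.one_apply, Prod.ext_iff]
  split_ifs <;> simp_all

lemma pt_conjTranspose (ρ : Matrix (a × b) (a × b) ℂ) :
    (partialTransposeA ρ)ᴴ = partialTransposeA ρᴴ := by
  ext ⟨p1, p2⟩ ⟨q1, q2⟩
  simp [partialTransposeA, Matrix.conjTranspose_apply]

end Aux

lemma invol_sq {R : Type*} [Ring R] (x y : R) (hx : x * x = 1) (hy : y * y = 1)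
    (hxy : x * y = y * x) : (1 + x + y - x * y) * (1 + x + y - x * y) = 4 := by
  have h1 : y * (x * y) = x := by rw [← mul_assoc, ← hxy, mul_assoc, hy, mul_one]
  have h2 : x * (y * x) = y := by rw [← mul_assoc, hxy, mul_assoc, hx, mul_one]
  have h3 : (x * y) * (x * y) = 1 := by rw [mul_assoc, h1, hx]
  have h4 : x * (x * y) = y := by rw [← mul_assoc, hx, one_mul]
  have h5 : (x * y) * x = y := by rw [hxy, mul_assoc, hx, mul_one]
  have h6 : (x * y) * y = x := by rw [mul_assoc, hy, mul_one]
  have h7 : y * x = x * y := hxy.symm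
  simp only [mul_add, add_mul, mul_sub, sub_mul, mul_one, one_mul, hx, hy, h1, h3, h4, h5, h6, h7]
  abel_nf
  norm_num

lemma pauliKron_mul {L : ℕ} (f g : Fin L → Matrix (Fin 2) (Fin 2) ℂ) :
    pauliKron f * pauliKron g = pauliKron (fun i => f i * g i) := by
  ext x z
  simp only [pauliKron, Matrix.mul_apply, Matrix.of_apply]
  rw [Finset.prod_univ_sum, Fintype.piFinset_univ]
  exact Finset.sum_congr rfl fun y _ => Finset.prod_mul_distrib.symm

lemma pauliKron_one {L : ℕ} : pauliKron (fun _ : Fin L => (1 : Matrix (Fin 2) (Fin 2) ℂ)) = 1 := by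
  ext x y
  simp only [pauliKron, Matrix.of_apply, Matrix.one_apply]
  by_cases h : x = y
  · subst h; simp
  · rw [if_neg h]
    obtain ⟨i, hi⟩ : ∃ i, x i ≠ y i := by
      by_contra hc; push_neg at hc; exact h (funext hc)
    exact Finset.prod_eq_zero (Finset.mem_univ i) (by simp [Matrix.one_apply, hi])

lemma pauli_product_sq {L : ℕ} {g : Matrix (Fin L → Fin 2) (Fin L → Fin 2) ℂ}
    (h : IsPauliProduct g) : ∃ d : ℂ, d ≠ 0 ∧ g * g = d • 1 := by
  obtain ⟨c, f, hc, hf, rfl⟩ := h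
  refine ⟨c * c, ?_, ?_⟩
  · rcases hc with rfl | rfl | rfl | rfl <;> simp [Complex.I_ne_zero]
  · rw [smul_mul_smul_comm, pauliKron_mul]
    have : (fun i => f i * f i) = fun _ => (1 : Matrix (Fin 2) (Fin 2) ℂ) := by
      funext i
      rcases hf i with h | h | h | h <;> rw [h] <;>
        simp [P_I, P_X, P_Y, P_Z] <;>
        ext a b <;> fin_cases a <;> fin_cases b <;>
        simp [Matrix.mul_apply, Fin.sum_univ_two, Matrix.one_apply, Complex.I_mul_I]
    rw [this, pauliKron_one]

lemma eig_of_smul_one {n : Type*} [Fintype n] [DecidableEq n] (r : ℝ)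
    {A : Matrix n n ℂ} (h : A.IsHermitian) (hA : A = (r : ℂ) • 1) (i : n) :
    h.eigenvalues i = r := by
  rw [h.eigenvalues_eq]
  subst hA
  simp only [Matrix.smul_mulVec, Matrix.one_mulVec, dotProduct_smul,
    ← EuclideanSpace.inner_eq_star_dotProduct, inner_self_eq_norm_sq_to_K,
    h.eigenvectorBasis.orthonormal.1 i, smul_eq_mul, one_pow, mul_one,
    Complex.ofReal_one, Complex.ofReal_re]
  rw [dotProduct_comm, ← EuclideanSpace.inner_eq_star_dotProduct, inner_self_eq_norm_sq_to_K,
    h.eigenvectorBasis.orthonormal.1 i]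
  norm_num

/-- For `ρ = (1/2^L)(1 + a + b + ab)` with `a,b` commuting Hermitian Pauli
products squaring to `1` whose A-parts anticommute, the partial transpose doubles the
trace norm: `‖ρ^{T_A}‖₁ = 2·Tr ρ`. -/
theorem stmt16 (LA LB : ℕ)
    (aA bA : Matrix (Fin LA → Fin 2) (Fin LA → Fin 2) ℂ)
    (aB bB : Matrix (Fin LB → Fin 2) (Fin LB → Fin 2) ℂ)
    (hpaA : IsPauliProduct aA) (hpbA : IsPauliProduct bA)
    (hpaB : IsPauliProduct aB) (hpbB : IsPauliProduct bB)
    (ha : (kron2 aA aB)ᴴ = kron2 aA aB) (hb : (kron2 bA bB)ᴴ = kron2 bA bB)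
    (hsa : kron2 aA aB * kron2 aA aB = 1) (hsb : kron2 bA bB * kron2 bA bB = 1)
    (hcomm : Commute (kron2 aA aB) (kron2 bA bB))
    (hanti : aA * bA = -(bA * aA))
    (ρ : Matrix ((Fin LA → Fin 2) × (Fin LB → Fin 2))
      ((Fin LA → Fin 2) × (Fin LB → Fin 2)) ℂ)
    (hρ : ρ = ((2 : ℂ) ^ (LA + LB))⁻¹ •
      (1 + kron2 aA aB + kron2 bA bB + kron2 aA aB * kron2 bA bB)) :
    traceNorm (partialTransposeA ρ) = 2 * ρ.trace.re := by
  classical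
  obtain ⟨dA, hdA0, hdA⟩ := pauli_product_sq hpaA
  obtain ⟨dB, hdB0, hdB⟩ := pauli_product_sq hpbA
  have hanti' : bA * aA = -(aA * bA) := by rw [hanti, neg_neg]
  have two_ne : ((2:ℂ)^(LA+LB)) ≠ 0 := pow_ne_zero _ two_ne_zero
  -- traces of the A-parts vanish
  have trab : (aA * bA).trace = 0 := by
    have h2 : (aA * bA).trace = -((aA * bA).trace) := by
      nth_rewrite 1 [hanti]
      rw [Matrix.trace_neg, Matrix.trace_mul_comm]
    have h3 : (2:ℂ) * (aA * bA).trace = 0 := by linear_combination h2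
    simpa using h3
  have traA : aA.trace = 0 := by
    have e1 : ((aA * bA) * bA).trace = dB * aA.trace := by
      rw [mul_assoc, hdB, Matrix.mul_smul, mul_one, Matrix.trace_smul, smul_eq_mul]
    have e2 : ((aA * bA) * bA).trace = -(dB * aA.trace) := by
      rw [hanti, neg_mul, Matrix.trace_neg, Matrix.trace_mul_comm, ← mul_assoc, hdB,
        Matrix.smul_mul, one_mul, Matrix.trace_smul, smul_eq_mul]
    have h3 : (2:ℂ) * (dB * aA.trace) = 0 := by linear_combination e1.symm.trans e2
    have h4 : dB * aA.trace = 0 := by simpa using h3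
    exact (mul_eq_zero.mp h4).resolve_left hdB0
  have trbA : bA.trace = 0 := by
    have e1 : ((bA * aA) * aA).trace = dA * bA.trace := by
      rw [mul_assoc, hdA, Matrix.mul_smul, mul_one, Matrix.trace_smul, smul_eq_mul]
    have e2 : ((bA * aA) * aA).trace = -(dA * bA.trace) := by
      rw [hanti', neg_mul, Matrix.trace_neg, Matrix.trace_mul_comm, ← mul_assoc, hdA,
        Matrix.smul_mul, one_mul, Matrix.trace_smul, smul_eq_mul]
    have h3 : (2:ℂ) * (dA * bA.trace) = 0 := by linear_combination e1.symm.trans e2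
    have h4 : dA * bA.trace = 0 := by simpa using h3
    exact (mul_eq_zero.mp h4).resolve_left hdA0
  -- the B-parts square to the inverse scalars
  set x0 : Fin LA → Fin 2 := fun _ => 0 with hx0
  have haB : aB * aB = dA⁻¹ • 1 := by
    have h1 : kron2 (aA * aA) (aB * aB) = 1 := by rw [← kron2_mul]; exact hsa
    ext p q
    have h2 := congr_fun (congr_fun h1 (x0, p)) (x0, q)
    simp only [kron2, Matrix.of_apply, hdA, Matrix.smul_apply, Matrix.one_apply_eq,
      smul_eq_mul, mul_one, Matrix.one_apply, Prod.mk.injEq, true_and, if_true] at h2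
    simp only [Matrix.smul_apply, Matrix.one_apply, smul_eq_mul]
    calc (aB * aB) p q = dA⁻¹ * (dA * (aB * aB) p q) := by
          rw [inv_mul_cancel_left₀ hdA0]
      _ = dA⁻¹ * (if p = q then 1 else 0) := by rw [h2]
  have hbB : bB * bB = dB⁻¹ • 1 := by
    have h1 : kron2 (bA * bA) (bB * bB) = 1 := by rw [← kron2_mul]; exact hsb
    ext p q
    have h2 := congr_fun (congr_fun h1 (x0, p)) (x0, q)
    simp only [kron2, Matrix.of_apply, hdB, Matrix.smul_apply, Matrix.one_apply_eq,
      smul_eq_mul, mul_one, Matrix.one_apply, Prod.mk.injEq, true_and, if_true] at h2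
    simp only [Matrix.smul_apply, Matrix.one_apply, smul_eq_mul]
    calc (bB * bB) p q = dB⁻¹ * (dB * (bB * bB) p q) := by
          rw [inv_mul_cancel_left₀ hdB0]
      _ = dB⁻¹ * (if p = q then 1 else 0) := by rw [h2]
  -- aA * bA is nonzero
  have key : (aA * bA) * (bA * aA) = (dB * dA) • 1 := by
    rw [mul_assoc, ← mul_assoc bA bA aA, hdB, Matrix.smul_mul, one_mul, Matrix.mul_smul,
      hdA, smul_smul]
  have hABne : aA * bA ≠ 0 := by
    intro h0
    rw [h0, zero_mul] at key
    have h1 := congr_fun (congr_fun key x0) x0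
    simp only [Matrix.zero_apply, Matrix.smul_apply, Matrix.one_apply_eq, smul_eq_mul,
      mul_one] at h1
    exact (mul_ne_zero hdB0 hdA0) h1.symm
  -- the B-parts anticommute
  have hcomm' : kron2 (aA * bA) (aB * bB) = kron2 (aA * bA) (-(bB * aB)) := by
    rw [kron2_neg_right, ← kron2_neg_left, ← hanti', ← kron2_mul, ← kron2_mul]
    exact hcomm
  obtain ⟨i, j, hij⟩ : ∃ i j, (aA * bA) i j ≠ 0 := by
    by_contra hc; push_neg at hc
    exact hABne (by ext i j; simpa using hc i j)
  have hantiB : aB * bB = -(bB * aB) := by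
    ext p q
    have h2 := congr_fun (congr_fun hcomm' (i, p)) (j, q)
    simp only [kron2, Matrix.of_apply] at h2
    exact mul_left_cancel₀ hij h2
  have hnegB : -(aB * bB) = bB * aB := by rw [hantiB, neg_neg]
  -- the partially transposed generators
  have hxx : kron2 aAᵀ aB * kron2 aAᵀ aB = 1 := by
    rw [kron2_mul, ← Matrix.transpose_mul, hdA, haB, Matrix.transpose_smul,
      Matrix.transpose_one, kron2_smul_left, kron2_smul_right, kron2_one, smul_smul,
      mul_inv_cancel₀ hdA0, one_smul]
  have hyy : kron2 bAᵀ bB * kron2 bAᵀ bB = 1 := by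
    rw [kron2_mul, ← Matrix.transpose_mul, hdB, hbB, Matrix.transpose_smul,
      Matrix.transpose_one, kron2_smul_left, kron2_smul_right, kron2_one, smul_smul,
      mul_inv_cancel₀ hdB0, one_smul]
  have htr : aAᵀ * bAᵀ = -(bAᵀ * aAᵀ) := by
    rw [← Matrix.transpose_mul, ← Matrix.transpose_mul, hanti', Matrix.transpose_neg]
  have hxy : kron2 aAᵀ aB * kron2 bAᵀ bB = kron2 bAᵀ bB * kron2 aAᵀ aB := by
    rw [kron2_mul, kron2_mul, htr, kron2_neg_left, ← kron2_neg_right, hnegB]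
  -- partial transpose of ρ
  have hPT : partialTransposeA ρ = ((2 : ℂ) ^ (LA + LB))⁻¹ •
      (1 + kron2 aAᵀ aB + kron2 bAᵀ bB - kron2 aAᵀ aB * kron2 bAᵀ bB) := by
    rw [hρ, kron2_mul, pt_smul, pt_add, pt_add, pt_add, pt_one, pt_kron2, pt_kron2, pt_kron2]
    congr 1
    rw [Matrix.transpose_mul, kron2_mul, htr, kron2_neg_left, sub_neg_eq_add]
  -- ρ is Hermitian, hence so is its partial transpose
  have hρH : ρᴴ = ρ := by
    rw [hρ]
    rw [Matrix.conjTranspose_smul, Matrix.conjTranspose_add, Matrix.conjTranspose_add,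
      Matrix.conjTranspose_add, Matrix.conjTranspose_one, Matrix.conjTranspose_mul, ha, hb,
      ← hcomm.eq]
    congr 1
    simp [star_inv₀, star_pow, Complex.star_def]
  have hH : (partialTransposeA ρ).IsHermitian := by
    show (partialTransposeA ρ)ᴴ = partialTransposeA ρ
    rw [pt_conjTranspose, hρH]
  -- the singular values
  have h4 : (4 : Matrix ((Fin LA → Fin 2) × (Fin LB → Fin 2))
      ((Fin LA → Fin 2) × (Fin LB → Fin 2)) ℂ) = (4 : ℂ) • 1 := by
    rw [← map_ofNat (algebraMap ℂ (Matrix ((Fin LA → Fin 2) × (Fin LB → Fin 2))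
      ((Fin LA → Fin 2) × (Fin LB → Fin 2)) ℂ)) 4, Algebra.algebraMap_eq_smul_one]
  have hMM : (partialTransposeA ρ)ᴴ * partialTransposeA ρ =
      (((2 * ((2:ℝ)^(LA+LB))⁻¹)^2 : ℝ) : ℂ) • 1 := by
    rw [hH.eq, hPT, smul_mul_smul_comm,
      invol_sq (kron2 aAᵀ aB) (kron2 bAᵀ bB) hxx hyy hxy, h4, smul_smul]
    congr 1
    push_cast
    ring
  have heig : ∀ k, (Matrix.isHermitian_conjTranspose_mul_self (partialTransposeA ρ)).eigenvalues k
      = (2 * ((2:ℝ)^(LA+LB))⁻¹)^2 := fun k => eig_of_smul_one _ _ hMM k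
  have hcard : Fintype.card ((Fin LA → Fin 2) × (Fin LB → Fin 2)) = 2^(LA+LB) := by
    simp [Fintype.card_fun, pow_add]
  have htn : traceNorm (partialTransposeA ρ) = 2 := by
    unfold traceNorm
    simp only [heig]
    rw [Finset.sum_const, Finset.card_univ, hcard,
      Real.sqrt_sq (by positivity), nsmul_eq_mul]
    push_cast
    field_simp
  -- trace of ρ
  have htrρ : ρ.trace = 1 := by
    rw [hρ, kron2_mul, Matrix.trace_smul, Matrix.trace_add, Matrix.trace_add,
      Matrix.trace_add, Matrix.trace_one, trace_kron2, trace_kron2, trace_kron2,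
      traA, trbA, trab, hcard]
    push_cast
    simp [smul_eq_mul, inv_mul_cancel₀ two_ne]
  rw [htn, htrρ]
  norm_num
end
end
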